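/- Assume φ : A → ℝ takes only nonnegative values and φ⁻¹({0}) ≠ ∅. Then φ is conserved by F if and only if for every shift-ergodic Borel probability measure μ on A^{ℤ^D}, ∫ φ(a(0)) dμ(a) = ∫ φ(F(a)(0)) dμ(a). -/

import Mathlib

open MeasureTheory
open scoped ENNReal

/-- The cellular automaton induced by a local rule `f` on neighbourhood `B`. -/
def induce {X A : Type*} [AddCommGroup X] (B : Finset X) (f : (B → A) → A)
    (a : X → A) : X → A :=
  fun x => f fun b => a (x + b.1)

/-- `ψ` is conserved by the CA induced by `f` on `B`. -/
def conserved {X A Z : Type*} [AddCommGroup X] [AddCommMonoid Z] (B : Finset X)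
    (f : (B → A) → A) (ψ : A → Z) : Prop :=
  (∃ a : A, ψ a = 0) ∧
  (∀ a : X → A, (Function.support fun x => ψ (a x)).Finite →
      (Function.support fun x => ψ (induce B f a x)).Finite) ∧
  (∀ a : X → A, (Function.support fun x => ψ (a x)).Finite →
      ∑ᶠ x, ψ (induce B f a x) = ∑ᶠ x, ψ (a x))

/-! ### Arithmetic helpers: reduction modulo `2n+1` to the interval `[-n, n]` -/

/-- reduce to `[-n, n]` mod `2n+1` -/
def redz (n : ℕ) (z : ℤ) : ℤ := (z + n) % (2*n+1) - n

lemma redz_spec (n : ℕ) (z : ℤ) :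
    -(n:ℤ) ≤ redz n z ∧ redz n z ≤ n ∧ (2*(n:ℤ)+1) ∣ (z - redz n z) := by
  have hm : (0:ℤ) < 2*n+1 := by positivity
  have h1 := Int.emod_nonneg (z + n) (by omega : (2*(n:ℤ)+1) ≠ 0)
  have h2 := Int.emod_lt_of_pos (z + n) hm
  have hdef : redz n z = (z + n) % (2*n+1) - n := rfl
  refine ⟨by omega, by omega, ⟨(z + n) / (2*n+1), ?_⟩⟩
  have h3 := Int.emod_add_mul_ediv (z + n) (2*n+1)
  unfold redz; linarith

lemma redz_eq_of (n : ℕ) (z w : ℤ) (h1 : -(n:ℤ) ≤ w) (h2 : w ≤ n)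
    (h3 : (2*(n:ℤ)+1) ∣ (z - w)) : redz n z = w := by
  obtain ⟨r1, r2, k, hk⟩ := redz_spec n z
  obtain ⟨j, hj⟩ := h3
  have hkj : redz n z - w = (2*(n:ℤ)+1) * (j - k) := by ring_nf; ring_nf at hk hj; omega
  set d := j - k with hd
  have : d = 0 := by
    rcases lt_trichotomy d 0 with h | h | h
    · nlinarith [hkj]
    · exact h
    · nlinarith [hkj]
  rw [this, mul_zero, sub_eq_zero] at hkj
  exact hkj

lemma redz_self (n : ℕ) (z : ℤ) (h1 : -(n:ℤ) ≤ z) (h2 : z ≤ n) : redz n z = z :=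
  redz_eq_of n z z h1 h2 ⟨0, by ring⟩

lemma redz_add (n : ℕ) (z w : ℤ) : redz n (redz n z + w) = redz n (z + w) := by
  obtain ⟨r1, r2, k, hk⟩ := redz_spec n (z + w)
  refine redz_eq_of n _ _ r1 r2 ?_
  obtain ⟨_, _, j, hj⟩ := redz_spec n z
  exact ⟨-j + k, by linarith [hj, hk]⟩

lemma redz_far (n s : ℕ) (z : ℤ) (hs : (s:ℤ) ≤ n)
    (hlo : (n:ℤ) - 2*s + 1 ≤ |z|) (hhi : |z| ≤ (n:ℤ) + s) :
    (n:ℤ) - 2*s + 1 ≤ |redz n z| := by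
  obtain ⟨r1, r2, k, hk⟩ := redz_spec n z
  have hz1 : -((n:ℤ) + s) ≤ z := by cases abs_cases z <;> omega
  have hz2 : z ≤ (n:ℤ) + s := by cases abs_cases z <;> omega
  have hk1 : -2 < k := by nlinarith
  have hk2 : k < 2 := by nlinarith
  interval_cases k
  · rw [abs_le] at hhi; rw [le_abs]; cases abs_cases z <;> omega
  · rw [le_abs]; cases abs_cases z <;> omega
  · rw [le_abs]; cases abs_cases z <;> omega

/-! ### Boxes in `ℤ^D` and coordinatewise reduction -/

noncomputable def boxZ (D n : ℕ) : Finset (Fin D → ℤ) := Fintype.piFinset fun _ => Finset.Icc (-(n:ℤ)) n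

def redv (D n : ℕ) (x : Fin D → ℤ) : Fin D → ℤ := fun i => redz n (x i)

lemma mem_boxZ {D n : ℕ} {x : Fin D → ℤ} :
    x ∈ boxZ D n ↔ ∀ i, -(n:ℤ) ≤ x i ∧ x i ≤ n := by
  simp [boxZ, Fintype.mem_piFinset, Finset.mem_Icc]

lemma not_mem_boxZ {D n : ℕ} {x : Fin D → ℤ} : x ∉ boxZ D n ↔ ∃ i, (n:ℤ) < |x i| := by
  rw [mem_boxZ]; push_neg
  constructor
  · rintro ⟨i, hi⟩; refine ⟨i, ?_⟩
    by_cases hc : -(n:ℤ) ≤ x i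
    · have := hi hc; cases abs_cases (x i) <;> omega
    · cases abs_cases (x i) <;> omega
  · rintro ⟨i, hi⟩; refine ⟨i, fun hc => ?_⟩; cases abs_cases (x i) <;> omega

lemma redv_mem {D n : ℕ} (x : Fin D → ℤ) : redv D n x ∈ boxZ D n :=
  mem_boxZ.2 fun i => ⟨(redz_spec n (x i)).1, (redz_spec n (x i)).2.1⟩

lemma redv_self {D n : ℕ} {x : Fin D → ℤ} (h : x ∈ boxZ D n) : redv D n x = x := by
  funext i; exact redz_self n (x i) (mem_boxZ.1 h i).1 (mem_boxZ.1 h i).2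

lemma redv_add {D n : ℕ} (x y : Fin D → ℤ) :
    redv D n (redv D n x + y) = redv D n (x + y) := by
  funext i; exact redz_add n (x i) (y i)

lemma card_boxZ (D n : ℕ) : (boxZ D n).card = (2*n+1)^D := by
  rw [boxZ, Fintype.card_piFinset]
  simp [Int.card_Icc]
  congr 1
  omega

lemma boxZ_mono {D n m : ℕ} (h : n ≤ m) : boxZ D n ⊆ boxZ D m := by
  intro x hx
  rw [mem_boxZ] at hx ⊢
  intro i
  have := hx i
  constructor <;> [omega; omega]

/-! ### Deterministic cellular-automaton lemmas -/

section CA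
variable {D : ℕ} {A : Type*} (B : Finset (Fin D → ℤ)) (f : (B → A) → A) (φ : A → ℝ)

/-- periodization of a configuration -/
def perc (n : ℕ) (a : (Fin D → ℤ) → A) : (Fin D → ℤ) → A := fun y => a (redv D n y)

lemma induce_shift (a : (Fin D → ℤ) → A) (x : Fin D → ℤ) :
    induce B f (fun y => a (y + x)) 0 = induce B f a x := by
  unfold induce
  congr 1
  funext b
  congr 1
  abel

lemma perc_shift (n : ℕ) (a : (Fin D → ℤ) → A) (x y : Fin D → ℤ) :
    perc n a (y + x) = perc n a (y + redv D n x) := by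
  unfold perc
  congr 1
  rw [show y + x = x + y by abel, show y + redv D n x = redv D n x + y by abel,
    ← redv_add x y, ← redv_add (redv D n x) y, redv_self (redv_mem x)]

variable {s : ℕ} (hs : ∀ b ∈ B, ∀ i, |b i| ≤ (s:ℤ))

section withS
variable (hLv : ∀ p : (B → A), (∀ b, φ (p b) = 0) → φ (f p) = 0)

include hs hLv in
lemma far_vacuum (a : (Fin D → ℤ) → A) (r : ℕ)
    (hsupp : ∀ x, x ∉ boxZ D r → φ (a x) = 0) (n : ℕ) (hn : r + 2*s + 1 ≤ n)
    (x : Fin D → ℤ) (hx : ∃ i, (n:ℤ) - s + 1 ≤ |x i|) :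
    φ (induce B f a x) = 0 := by
  apply hLv
  rintro ⟨b, hb⟩
  apply hsupp
  obtain ⟨i, hi⟩ := hx
  rw [not_mem_boxZ]
  refine ⟨i, ?_⟩
  have hbs := hs b hb i
  simp only [Pi.add_apply]
  rw [lt_abs]
  rcases abs_cases (x i) with ⟨he, _⟩ | ⟨he, _⟩ <;> rw [he] at hi <;>
    rcases abs_cases (b i) with ⟨hf, _⟩ | ⟨hf, _⟩ <;> rw [hf] at hbs <;> omega

include hs hLv in
lemma seam_vacuum (a : (Fin D → ℤ) → A) (r : ℕ)
    (hsupp : ∀ x, x ∉ boxZ D r → φ (a x) = 0) (n : ℕ) (hn : r + 2*s + 1 ≤ n)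
    (x : Fin D → ℤ) (hxbox : x ∈ boxZ D n) (hx : ∃ i, (n:ℤ) - s + 1 ≤ |x i|) :
    φ (induce B f (perc n a) x) = 0 := by
  apply hLv
  rintro ⟨b, hb⟩
  obtain ⟨i, hi⟩ := hx
  have hbs := hs b hb i
  have hxi := mem_boxZ.1 hxbox i
  show φ (a (redv D n (x + b))) = 0
  apply hsupp
  rw [not_mem_boxZ]
  refine ⟨i, ?_⟩
  have hfar : (n:ℤ) - 2*s + 1 ≤ |redz n (x i + b i)| := by
    apply redz_far n s _ (by omega)
    · rw [le_abs]
      rcases abs_cases (x i) with ⟨he, _⟩ | ⟨he, _⟩ <;> rw [he] at hi <;>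
        rcases abs_cases (b i) with ⟨hf, _⟩ | ⟨hf, _⟩ <;> rw [hf] at hbs <;> omega
    · rw [abs_le]
      rcases abs_cases (b i) with ⟨hf, _⟩ | ⟨hf, _⟩ <;> rw [hf] at hbs <;> omega
  have hred : redv D n (x + b) i = redz n (x i + b i) := rfl
  rw [hred, lt_abs]
  rcases abs_cases (redz n (x i + b i)) with ⟨he, _⟩ | ⟨he, _⟩ <;> rw [he] at hfar <;> omega

include hs in
lemma inner_eq (a : (Fin D → ℤ) → A) (n m : ℕ) (hnm : m + s ≤ n)
    (x : Fin D → ℤ) (hx : x ∈ boxZ D m) :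
    induce B f (perc n a) x = induce B f a x := by
  unfold induce
  congr 1
  funext b
  show perc n a (x + b.1) = a (x + b.1)
  unfold perc
  rw [redv_self]
  rw [mem_boxZ]
  intro i
  have h1 := (mem_boxZ.1 hx) i
  have h2 := hs b.1 b.2 i
  simp only [Pi.add_apply]
  cases abs_cases (b.1 i) <;> omega

include hs hLv in
/-- main deterministic consequence used in the backward direction. -/
lemma backward_main (hpos : ∀ c, 0 ≤ φ c) (a : (Fin D → ℤ) → A) (r : ℕ)
    (hsupp : ∀ x, x ∉ boxZ D r → φ (a x) = 0)
    (hcore : ∑ x ∈ boxZ D (r + 2*s + 1), φ (perc (r + 2*s + 1) a x)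
        = ∑ x ∈ boxZ D (r + 2*s + 1), φ (induce B f (perc (r + 2*s + 1) a) x)) :
    (Function.support fun x => φ (induce B f a x)).Finite ∧
      ∑ᶠ x, φ (induce B f a x) = ∑ᶠ x, φ (a x) := by
  set n := r + 2*s + 1 with hn
  set m := r + s + 1 with hm
  have hsub : boxZ D m ⊆ boxZ D n := boxZ_mono (by omega)
  have hout : ∀ x, x ∉ boxZ D m → φ (induce B f a x) = 0 := by
    intro x hx
    apply far_vacuum B f φ hs hLv a r hsupp n le_rfl
    rw [not_mem_boxZ] at hx
    obtain ⟨i, hi⟩ := hx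
    refine ⟨i, ?_⟩
    have : (m:ℤ) < |x i| := hi
    omega
  have hsuppF : (Function.support fun x => φ (induce B f a x)) ⊆ ↑(boxZ D m) := by
    intro x hx
    by_contra h
    exact hx (hout x h)
  refine ⟨Set.Finite.subset (boxZ D m).finite_toSet hsuppF, ?_⟩
  rw [finsum_eq_finset_sum_of_support_subset _ hsuppF]
  have hsuppa : (Function.support fun x => φ (a x)) ⊆ ↑(boxZ D n) := by
    intro x hx
    by_contra h
    exact hx (hsupp x fun hc => h (boxZ_mono (by omega) hc))
  rw [finsum_eq_finset_sum_of_support_subset _ hsuppa]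
  have e1 : ∑ x ∈ boxZ D n, φ (a x) = ∑ x ∈ boxZ D n, φ (perc n a x) := by
    apply Finset.sum_congr rfl
    intro x hx
    unfold perc
    rw [redv_self hx]
  have e2 : ∑ x ∈ boxZ D n, φ (induce B f (perc n a) x)
      = ∑ x ∈ boxZ D m, φ (induce B f (perc n a) x) := by
    symm
    apply Finset.sum_subset hsub
    intro x hx hxm
    apply seam_vacuum B f φ hs hLv a r hsupp n le_rfl x hx
    rw [not_mem_boxZ] at hxm
    obtain ⟨i, hi⟩ := hxm
    refine ⟨i, ?_⟩
    have : (m:ℤ) < |x i| := hi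
    omega
  have e3 : ∑ x ∈ boxZ D m, φ (induce B f (perc n a) x)
      = ∑ x ∈ boxZ D m, φ (induce B f a x) := by
    apply Finset.sum_congr rfl
    intro x hx
    rw [inner_eq B f hs a n m (by omega) x hx]
  rw [e1, hcore, e2, e3]

include hs hLv in
/-- main deterministic estimate used in the forward direction. -/
lemma forward_estimate (hpos : ∀ c, 0 ≤ φ c) (v : A) (hv : φ v = 0) (M : ℝ) (hM : ∀ c, φ c ≤ M)
    (hsum : ∀ a : (Fin D → ℤ) → A, (Function.support fun x => φ (a x)).Finite →
      ∑ᶠ x, φ (induce B f a x) = ∑ᶠ x, φ (a x))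
    (a : (Fin D → ℤ) → A) (t : ℕ) :
    |∑ x ∈ boxZ D (s+t), (φ (induce B f a x) - φ (a x))|
      ≤ M * ((boxZ D (s+t+s)).card - (boxZ D t).card) := by
  classical
  set n := s + t with hn
  set abar : (Fin D → ℤ) → A := fun y => if y ∈ boxZ D n then a y else v with habar
  have hsupp : (Function.support fun x => φ (abar x)) ⊆ ↑(boxZ D n) := by
    intro x hx
    by_contra h
    apply hx
    have h' : x ∉ boxZ D n := by simpa using h
    simp only [habar, if_neg h', hv]
  have hfin : (Function.support fun x => φ (abar x)).Finite :=
    Set.Finite.subset (boxZ D n).finite_toSet hsupp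
  have h1 : ∑ᶠ x, φ (abar x) = ∑ x ∈ boxZ D n, φ (a x) := by
    rw [finsum_eq_finset_sum_of_support_subset _ hsupp]
    apply Finset.sum_congr rfl
    intro x hx
    simp [habar, if_pos hx]
  have hsuppF : (Function.support fun x => φ (induce B f abar x)) ⊆ ↑(boxZ D (n+s)) := by
    intro x hx
    by_contra h
    apply hx
    apply hLv
    rintro ⟨b, hb⟩
    show φ (abar (x + b)) = 0
    have h' : x ∉ boxZ D (n+s) := by simpa using h
    rw [not_mem_boxZ] at h'
    obtain ⟨i, hi⟩ := h'
    have hbs := hs b hb i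
    have hnot : x + b ∉ boxZ D n := by
      rw [not_mem_boxZ]
      refine ⟨i, ?_⟩
      simp only [Pi.add_apply]
      rw [lt_abs]
      rcases abs_cases (x i) with ⟨he, _⟩ | ⟨he, _⟩ <;> rw [he] at hi <;>
        rcases abs_cases (b i) with ⟨hf, _⟩ | ⟨hf, _⟩ <;> rw [hf] at hbs <;> omega
    simp only [habar, if_neg hnot, hv]
  have h2 : ∑ᶠ x, φ (induce B f abar x) = ∑ x ∈ boxZ D (n+s), φ (induce B f abar x) :=
    finsum_eq_finset_sum_of_support_subset _ hsuppF
  have hinner : ∀ x ∈ boxZ D t, induce B f abar x = induce B f a x := by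
    intro x hx
    unfold induce
    congr 1
    funext b
    show abar (x + b.1) = a (x + b.1)
    have : x + b.1 ∈ boxZ D n := by
      rw [mem_boxZ]
      intro i
      have h1 := (mem_boxZ.1 hx) i
      have h2 := hs b.1 b.2 i
      simp only [Pi.add_apply]
      cases abs_cases (b.1 i) <;> omega
    simp [habar, if_pos this]
  have key : ∑ᶠ x, φ (induce B f abar x) = ∑ x ∈ boxZ D n, φ (a x) := by
    rw [hsum abar hfin, h1]
  rw [h2] at key
  have hsub1 : boxZ D t ⊆ boxZ D n := boxZ_mono (by omega)
  have hsub2 : boxZ D t ⊆ boxZ D (n+s) := boxZ_mono (by omega)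
  have split1 : ∑ x ∈ boxZ D n, φ (induce B f a x)
      = ∑ x ∈ boxZ D n \ boxZ D t, φ (induce B f a x)
        + ∑ x ∈ boxZ D t, φ (induce B f a x) :=
    (Finset.sum_sdiff hsub1).symm
  have split2 : ∑ x ∈ boxZ D (n+s), φ (induce B f abar x)
      = ∑ x ∈ boxZ D (n+s) \ boxZ D t, φ (induce B f abar x)
        + ∑ x ∈ boxZ D t, φ (induce B f abar x) :=
    (Finset.sum_sdiff hsub2).symm
  have hteq : ∑ x ∈ boxZ D t, φ (induce B f abar x) = ∑ x ∈ boxZ D t, φ (induce B f a x) :=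
    Finset.sum_congr rfl fun x hx => by rw [hinner x hx]
  rw [Finset.sum_sub_distrib]
  have main : ∑ x ∈ boxZ D n, φ (induce B f a x) - ∑ x ∈ boxZ D n, φ (a x)
      = ∑ x ∈ boxZ D n \ boxZ D t, φ (induce B f a x)
        - ∑ x ∈ boxZ D (n+s) \ boxZ D t, φ (induce B f abar x) := by
    rw [← key, split1, split2, hteq]; ring
  rw [main]
  have bnd : ∀ (u : Finset (Fin D → ℤ)) (g : (Fin D → ℤ) → ℝ), (∀ x, 0 ≤ g x) →
      (∀ x, g x ≤ M) → (0:ℝ) ≤ ∑ x ∈ u, g x ∧ ∑ x ∈ u, g x ≤ M * u.card := by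
    intro u g hg hgM
    constructor
    · exact Finset.sum_nonneg fun x _ => hg x
    · calc ∑ x ∈ u, g x ≤ ∑ x ∈ u, M := Finset.sum_le_sum fun x _ => hgM _
        _ = M * u.card := by rw [Finset.sum_const, nsmul_eq_mul]; ring
  have hM0 : 0 ≤ M := le_trans (hpos v) (hM v)
  obtain ⟨hS1a, hS1b⟩ := bnd (boxZ D n \ boxZ D t) (fun x => φ (induce B f a x))
    (fun x => hpos _) (fun x => hM _)
  obtain ⟨hS2a, hS2b⟩ := bnd (boxZ D (n+s) \ boxZ D t) (fun x => φ (induce B f abar x))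
    (fun x => hpos _) (fun x => hM _)
  have hcard1 : ((boxZ D n \ boxZ D t).card : ℝ)
      ≤ ((boxZ D (n+s) \ boxZ D t).card : ℝ) := by
    have : boxZ D n \ boxZ D t ⊆ boxZ D (n+s) \ boxZ D t :=
      Finset.sdiff_subset_sdiff (boxZ_mono (by omega)) le_rfl
    exact_mod_cast Finset.card_le_card this
  have hcard2 : ((boxZ D (n+s) \ boxZ D t).card : ℝ)
      = ((boxZ D (s+t+s)).card : ℝ) - ((boxZ D t).card : ℝ) := by
    rw [Finset.card_sdiff_of_subset hsub2]
    have hle := Finset.card_le_card hsub2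
    have : (n : ℕ) + s = s+t+s := by omega
    rw [this] at *
    push_cast [Nat.cast_sub hle]
    ring
  rw [abs_sub_le_iff]
  constructor
  · calc _ ≤ ∑ x ∈ boxZ D n \ boxZ D t, φ (induce B f a x) := by linarith
      _ ≤ M * ((boxZ D n \ boxZ D t).card : ℝ) := hS1b
      _ ≤ M * ((boxZ D (n+s) \ boxZ D t).card : ℝ) := by nlinarith
      _ = _ := by rw [hcard2]
  · calc _ ≤ ∑ x ∈ boxZ D (n+s) \ boxZ D t, φ (induce B f abar x) := by linarith
      _ ≤ M * ((boxZ D (n+s) \ boxZ D t).card : ℝ) := hS2b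
      _ = _ := by rw [hcard2]

end withS
end CA

/-! ### Real-power inequality -/

lemma pow_sub_pow_le_aux (a b : ℝ) (hb : 0 ≤ b) (hab : b ≤ a) :
    ∀ d : ℕ, a^(d+1) - b^(d+1) ≤ ((d:ℝ)+1)*(a-b)*a^d := by
  intro d
  induction d with
  | zero => simp
  | succ e ih =>
    have ha : 0 ≤ a := le_trans hb hab
    have hba : b^(e+1) ≤ a^(e+1) := pow_le_pow_left₀ hb hab _
    have hone : a^(e+1+1) - b^(e+1+1) = a*(a^(e+1) - b^(e+1)) + (a-b)*b^(e+1) := by ring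
    rw [hone]
    have h1 : a*(a^(e+1) - b^(e+1)) ≤ a*(((e:ℝ)+1)*(a-b)*a^e) := mul_le_mul_of_nonneg_left ih ha
    have h2 : (a-b)*b^(e+1) ≤ (a-b)*a^(e+1) := mul_le_mul_of_nonneg_left hba (by linarith)
    have h3 : a*(((e:ℝ)+1)*(a-b)*a^e) = ((e:ℝ)+1)*(a-b)*a^(e+1) := by ring
    push_cast
    nlinarith [h1, h2, h3]

/-- pushforward of a finite sum of measures -/
lemma map_finset_sum_measure {α β ι : Type*} [MeasurableSpace α] [MeasurableSpace β] {g : α → β}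
    (hg : Measurable g) (s : Finset ι) (m : ι → Measure α) :
    Measure.map g (∑ i ∈ s, m i) = ∑ i ∈ s, Measure.map g (m i) := by
  simp_rw [← Measure.mapₗ_apply_of_measurable hg]
  exact map_sum (Measure.mapₗ g) m s

theorem stmt8 {A : Type*} [Fintype A] [Nonempty A]
    [MeasurableSpace A] [DiscreteMeasurableSpace A]
    {D : ℕ} (hD : 1 ≤ D)
    (B : Finset (Fin D → ℤ)) (hB0 : (0 : Fin D → ℤ) ∈ B)
    (hBsym : ∀ b : Fin D → ℤ, b ∈ B ↔ -b ∈ B)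
    (f : (B → A) → A) (φ : A → ℝ)
    (hpos : ∀ a : A, 0 ≤ φ a) (hvac : ∃ a : A, φ a = 0) :
    conserved B f φ ↔
      ∀ μ : Measure ((Fin D → ℤ) → A), IsProbabilityMeasure μ →
        (∀ x : Fin D → ℤ, Measure.map (fun a y => a (y + x)) μ = μ) →
        (∀ E : Set ((Fin D → ℤ) → A), MeasurableSet E →
          (∀ x : Fin D → ℤ, (fun (a : (Fin D → ℤ) → A) (y : Fin D → ℤ) => a (y + x)) '' E = E) →
          μ E = 0 ∨ μ E = 1) →
        ∫ a, φ (a 0) ∂μ = ∫ a, φ (induce B f a 0) ∂μ := by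
  classical
  obtain ⟨v, hv⟩ := hvac
  obtain ⟨s, hs⟩ : ∃ s : ℕ, ∀ b ∈ B, ∀ i, |b i| ≤ (s:ℤ) := by
    refine ⟨B.sup (fun b => Finset.univ.sup fun i => (b i).natAbs), ?_⟩
    intro b hb i
    have h2 : (Finset.univ.sup fun i => (b i).natAbs)
        ≤ B.sup (fun b => Finset.univ.sup fun i => (b i).natAbs) :=
      Finset.le_sup (f := fun b : Fin D → ℤ => Finset.univ.sup fun i => (b i).natAbs) hb
    have h1 : (b i).natAbs ≤ Finset.univ.sup fun i => (b i).natAbs :=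
      Finset.le_sup (f := fun i => (b i).natAbs) (Finset.mem_univ i)
    rw [Int.abs_eq_natAbs]
    exact_mod_cast le_trans h1 h2
  have meas1 : ∀ x : Fin D → ℤ, Measurable fun a : (Fin D → ℤ) → A => φ (a x) :=
    fun x => (measurable_of_countable φ).comp (measurable_pi_apply x)
  have meas2 : ∀ x : Fin D → ℤ, Measurable fun a : (Fin D → ℤ) → A => φ (induce B f a x) := by
    intro x
    have : (fun a : (Fin D → ℤ) → A => φ (induce B f a x))
        = (fun q : B → A => φ (f q)) ∘ (fun a (b : B) => a (x + b.1)) := rfl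
    rw [this]
    exact (measurable_of_countable _).comp (measurable_pi_lambda _ fun b => measurable_pi_apply _)
  obtain ⟨M, hM⟩ : ∃ M : ℝ, ∀ c : A, φ c ≤ M :=
    ⟨Finset.univ.sup' Finset.univ_nonempty φ, fun c => Finset.le_sup' φ (Finset.mem_univ c)⟩
  have hM0 : 0 ≤ M := le_trans (hpos v) (hM v)
  have hnorm : ∀ c : A, ‖φ c‖ ≤ M := fun c => by
    rw [Real.norm_eq_abs, abs_of_nonneg (hpos c)]; exact hM c
  constructor
  · -- forward direction
    intro hc μ hprob hinv herg
    -- the vacuum lemma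
    have hLv : ∀ p : (B → A), (∀ b, φ (p b) = 0) → φ (f p) = 0 := by
      intro p hp
      set c0 : (Fin D → ℤ) → A := fun y => if h : y ∈ B then p ⟨y, h⟩ else v with hc0
      have hup : ∀ y, φ (c0 y) = 0 := by
        intro y
        by_cases h : y ∈ B <;> simp [hc0, h, hp, hv]
      have hfin : (Function.support fun x => φ (c0 x)).Finite := by
        have : (Function.support fun x => φ (c0 x)) = ∅ := by
          ext y; simp [Function.mem_support, hup]
        rw [this]; exact Set.finite_empty
      have hzero : ∑ᶠ x, φ (c0 x) = 0 := by
        apply finsum_eq_zero_of_forall_eq_zero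
        intro y; exact hup y
      have hFfin := hc.2.1 c0 hfin
      have hFsum := hc.2.2 c0 hfin
      rw [hzero] at hFsum
      have hss : (Function.support fun x => φ (induce B f c0 x)) ⊆ ↑hFfin.toFinset := by
        intro x hx; simpa using hx
      rw [finsum_eq_finset_sum_of_support_subset _ hss] at hFsum
      have hall : ∀ x, φ (induce B f c0 x) = 0 := by
        intro x
        by_cases hx : x ∈ hFfin.toFinset
        · exact (Finset.sum_eq_zero_iff_of_nonneg (fun y _ => hpos _)).1 hFsum x hx
        · by_contra hne
          exact hx (by simpa [Set.Finite.mem_toFinset, Function.mem_support] using hne)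
      have h0 := hall 0
      have he : induce B f c0 0 = f p := by
        unfold induce
        congr 1
        funext b
        show c0 ((0 : Fin D → ℤ) + b.1) = p b
        rw [zero_add]
        simp only [hc0]
        rw [dif_pos b.2]
      rwa [he] at h0
    -- integrability / shift invariance of integrals
    have integ : ∀ (g : ((Fin D → ℤ) → A) → ℝ), Measurable g → (∀ a, ‖g a‖ ≤ M) →
        Integrable g μ := fun g hg hgb =>
      ⟨hg.aestronglyMeasurable, HasFiniteIntegral.of_bounded (ae_of_all _ hgb)⟩
    have hshift : ∀ (g : ((Fin D → ℤ) → A) → ℝ), Measurable g → ∀ z : Fin D → ℤ,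
        ∫ a, g (fun y => a (y + z)) ∂μ = ∫ a, g a ∂μ := by
      intro g hg z
      have hm : Measurable (fun a : (Fin D → ℤ) → A => fun y => a (y + z)) :=
        measurable_pi_lambda _ fun y => measurable_pi_apply (y + z)
      conv_rhs => rw [← hinv z]
      rw [integral_map hm.aemeasurable ((hinv z) ▸ hg.aestronglyMeasurable)]
    have hI1 : ∀ x : Fin D → ℤ, ∫ a, φ (a x) ∂μ = ∫ a, φ (a 0) ∂μ := by
      intro x
      have := hshift (fun a => φ (a 0)) (meas1 0) x
      simpa [zero_add] using this
    have hI2 : ∀ x : Fin D → ℤ, ∫ a, φ (induce B f a x) ∂μ = ∫ a, φ (induce B f a 0) ∂μ := by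
      intro x
      have := hshift (fun a => φ (induce B f a 0)) (meas2 0) x
      simp only [induce_shift] at this
      exact this
    set I1 : ℝ := ∫ a, φ (a 0) ∂μ with hI1def
    set I2 : ℝ := ∫ a, φ (induce B f a 0) ∂μ with hI2def
    obtain ⟨e, he⟩ : ∃ e, D = e + 1 := ⟨D - 1, (Nat.succ_pred_eq_of_pos hD).symm⟩
    have key : ∀ t : ℕ, |I2 - I1| * ((2*((s:ℝ)+t)+1))^D
        ≤ M * (((2*((s:ℝ)+t+s)+1))^D - ((2*(t:ℝ)+1))^D) := by
      intro t
      have hintsub : ∀ x : Fin D → ℤ, Integrable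
          (fun a : (Fin D → ℤ) → A => φ (induce B f a x) - φ (a x)) μ := by
        intro x
        exact ((integ _ (meas2 x) fun a => hnorm _).sub (integ _ (meas1 x) fun a => hnorm _))
      have hsum_int : ∫ a, (∑ x ∈ boxZ D (s+t), (φ (induce B f a x) - φ (a x))) ∂μ
          = ((boxZ D (s+t)).card : ℝ) * (I2 - I1) := by
        rw [integral_finset_sum _ (fun x _ => hintsub x)]
        have : ∀ x ∈ boxZ D (s+t), ∫ a, (φ (induce B f a x) - φ (a x)) ∂μ = I2 - I1 := by
          intro x _
          rw [integral_sub (integ _ (meas2 x) fun a => hnorm _)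
            (integ _ (meas1 x) fun a => hnorm _), hI1 x, hI2 x]
        rw [Finset.sum_congr rfl this, Finset.sum_const, nsmul_eq_mul]
      have hptwise : ∀ a : (Fin D → ℤ) → A,
          ‖∑ x ∈ boxZ D (s+t), (φ (induce B f a x) - φ (a x))‖
            ≤ M * (((boxZ D (s+t+s)).card : ℝ) - ((boxZ D t).card : ℝ)) := by
        intro a
        rw [Real.norm_eq_abs]
        exact forward_estimate B f φ hs hLv hpos v hv M hM hc.2.2 a t
      have hb := norm_integral_le_of_norm_le_const (μ := μ) (ae_of_all _ hptwise)
      rw [hsum_int] at hb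
      have hmuuniv : μ.real Set.univ = 1 := by
        show (μ Set.univ).toReal = 1
        rw [hprob.measure_univ]; simp
      rw [hmuuniv, mul_one, Real.norm_eq_abs, abs_mul, abs_of_nonneg
        (Nat.cast_nonneg _ : (0:ℝ) ≤ ((boxZ D (s+t)).card : ℝ))] at hb
      have hc1 : ((boxZ D (s+t)).card : ℝ) = ((2*((s:ℝ)+t)+1))^D := by
        rw [card_boxZ]; push_cast; ring
      have hc2 : ((boxZ D (s+t+s)).card : ℝ) = ((2*((s:ℝ)+t+s)+1))^D := by
        rw [card_boxZ]; push_cast; ring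
      have hc3 : ((boxZ D t).card : ℝ) = ((2*(t:ℝ)+1))^D := by
        rw [card_boxZ]; push_cast; ring
      rw [hc1, hc2, hc3] at hb
      linarith [hb]
    -- conclude via limit
    have habs : I1 = I2 := by
      by_contra hne
      have hpos' : 0 < |I2 - I1| := abs_pos.2 (sub_ne_zero.2 fun h => hne h.symm)
      set K : ℝ := M * ((e:ℝ)+1) * (4*s) * ((2*(s:ℝ)+1))^e with hK
      have hKbound : ∀ t : ℕ, |I2 - I1| * (2*((s:ℝ)+t)+1) ≤ K := by
        intro t
        have hkey := key t
        set N : ℝ := 2*((s:ℝ)+t)+1 with hN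
        have hN1 : 1 ≤ N := by
          simp only [hN]
          have h0 : (0:ℝ) ≤ (s:ℝ)+t := by positivity
          linarith
        have hsmall : (0:ℝ) ≤ 2*(t:ℝ)+1 := by positivity
        have hsa : (2*(t:ℝ)+1) ≤ N + 2*s := by simp only [hN]; push_cast; linarith
        have hNb : 2*((s:ℝ)+t+s)+1 = N + 2*s := by simp only [hN]; push_cast; ring
        have hNelts : 2*(t:ℝ)+1 = N - 2*s := by simp only [hN]; push_cast; ring
        rw [he] at hkey
        rw [hNb, hNelts] at hkey
        have hstep : (N + 2*s)^(e+1) - (N - 2*s)^(e+1)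
            ≤ ((e:ℝ)+1) * (4*s) * (N+2*s)^e := by
          have := pow_sub_pow_le_aux (N + 2*s) (N - 2*s) (by linarith [hNelts, hsmall])
            (by linarith) e
          calc (N + 2*s)^(e+1) - (N - 2*s)^(e+1)
              ≤ ((e:ℝ)+1)*((N+2*s)-(N-2*s))*(N+2*s)^e := this
            _ = ((e:ℝ)+1) * (4*s) * (N+2*s)^e := by ring
        have hpow : (N+2*s)^e ≤ ((2*(s:ℝ)+1))^e * N^e := by
          have h1 : N + 2*s ≤ (2*(s:ℝ)+1) * N := by nlinarith
          calc (N+2*s)^e ≤ ((2*(s:ℝ)+1) * N)^e :=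
                pow_le_pow_left₀ (by positivity) h1 e
            _ = ((2*(s:ℝ)+1))^e * N^e := mul_pow _ _ _
        have hchain : |I2 - I1| * N^(e+1) ≤ K * N^e := by
          calc |I2 - I1| * N^(e+1) ≤ M * ((N + 2*s)^(e+1) - (N - 2*s)^(e+1)) := hkey
            _ ≤ M * (((e:ℝ)+1) * (4*s) * (N+2*s)^e) := by nlinarith
            _ ≤ M * (((e:ℝ)+1) * (4*s) * (((2*(s:ℝ)+1))^e * N^e)) := by
                have h4s : (0:ℝ) ≤ ((e:ℝ)+1) * (4*s) := by positivity
                nlinarith [hpow, h4s, hM0, mul_le_mul_of_nonneg_left hpow h4s]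
            _ = K * N^e := by rw [hK]; ring
        have hNe : (0:ℝ) < N^e := by positivity
        have : |I2 - I1| * N * N^e ≤ K * N^e := by
          calc |I2 - I1| * N * N^e = |I2 - I1| * N^(e+1) := by ring
            _ ≤ K * N^e := hchain
        exact le_of_mul_le_mul_right this hNe
      obtain ⟨t, ht⟩ := exists_nat_gt (K / |I2 - I1|)
      have h1 : K < |I2 - I1| * t := by
        rw [div_lt_iff₀ hpos'] at ht; linarith
      have h2 : |I2 - I1| * (t:ℝ) ≤ |I2 - I1| * (2*((s:ℝ)+t)+1) := by
        apply mul_le_mul_of_nonneg_left _ (abs_nonneg _)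
        push_cast; linarith
      linarith [hKbound t]
    exact habs
  · -- backward direction
    intro hR
    -- the core identity coming from uniform measures on periodic orbits
    have hcore : ∀ (a : (Fin D → ℤ) → A) (n : ℕ),
        ∑ x ∈ boxZ D n, φ (perc n a x) = ∑ x ∈ boxZ D n, φ (induce B f (perc n a) x) := by
      intro a n
      set C := boxZ D n with hC
      set pa := perc n a with hpa
      have hC0 : (0 : Fin D → ℤ) ∈ C := mem_boxZ.2 fun i => by simp
      have hcards : C.card ≠ 0 := Finset.card_ne_zero_of_mem hC0
      have hcard0 : ((C.card : ℝ≥0∞)) ≠ 0 := by exact_mod_cast hcards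
      have hcardtop : ((C.card : ℝ≥0∞)) ≠ ⊤ := ENNReal.natCast_ne_top _
      set μ : Measure ((Fin D → ℤ) → A) :=
        (C.card : ℝ≥0∞)⁻¹ • ∑ x ∈ C, Measure.dirac (fun y => pa (y + x)) with hμ
      have hprob : IsProbabilityMeasure μ := by
        constructor
        rw [hμ, Measure.smul_apply, Measure.finset_sum_apply]
        simp only [measure_univ, Finset.sum_const, nsmul_eq_mul, mul_one, smul_eq_mul]
        exact ENNReal.inv_mul_cancel hcard0 hcardtop
      have hmz : ∀ z : Fin D → ℤ, Measurable (fun a : (Fin D → ℤ) → A => fun y => a (y + z)) :=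
        fun z => measurable_pi_lambda _ fun y => measurable_pi_apply (y + z)
      have hinv : ∀ z : Fin D → ℤ, Measure.map (fun a y => a (y + z)) μ = μ := by
        intro z
        rw [hμ, Measure.map_smul]
        congr 1
        rw [map_finset_sum_measure (hmz z)]
        have hd : ∀ x ∈ C, Measure.map (fun a y => a (y+z)) (Measure.dirac (fun y => pa (y + x)))
            = Measure.dirac (fun y => pa (y + redv D n (x + z))) := by
          intro x hx
          rw [Measure.map_dirac' (hmz z)]
          congr 1
          funext y
          show pa (y + z + x) = pa (y + redv D n (x + z))
          rw [show y + z + x = y + (x + z) by abel]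
          exact perc_shift n a (x + z) y
        rw [Finset.sum_congr rfl hd]
        refine Finset.sum_bij' (fun x _ => redv D n (x + z)) (fun x _ => redv D n (x + -z))
          (fun x hx => redv_mem _) (fun x hx => redv_mem _) ?_ ?_ ?_
        · intro x hx
          show redv D n (redv D n (x + z) + -z) = x
          rw [redv_add, show x + z + -z = x by abel, redv_self hx]
        · intro x hx
          show redv D n (redv D n (x + -z) + z) = x
          rw [redv_add, show x + -z + z = x by abel, redv_self hx]
        · intro x hx
          rfl
      have herg : ∀ E : Set ((Fin D → ℤ) → A), MeasurableSet E →
          (∀ x : Fin D → ℤ, (fun (a : (Fin D → ℤ) → A) (y : Fin D → ℤ) => a (y + x)) '' E = E) →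
          μ E = 0 ∨ μ E = 1 := by
        intro E hE hEinv
        have hper : ∀ (x : Fin D → ℤ) (b : (Fin D → ℤ) → A),
            (fun y => b (y + x)) ∈ E ↔ b ∈ E := by
          intro x b
          constructor
          · intro h
            rw [← hEinv x] at h
            obtain ⟨c, hcE, hcc⟩ := h
            have hcb : c = b := by
              funext y
              have := congrFun hcc (y - x)
              simpa [sub_add_cancel] using this
            rwa [← hcb]
          · intro h
            rw [← hEinv x]
            exact ⟨b, h, rfl⟩
        rw [hμ, Measure.smul_apply, Measure.finset_sum_apply]
        by_cases hpE : pa ∈ E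
        · right
          have hd : ∀ x ∈ C, Measure.dirac (fun y => pa (y + x)) E = 1 := by
            intro x hx
            rw [Measure.dirac_apply' _ hE]
            have : (fun y => pa (y + x)) ∈ E := (hper x pa).2 hpE
            simp [Set.indicator_of_mem this]
          rw [Finset.sum_congr rfl hd]
          simp only [Finset.sum_const, nsmul_eq_mul, mul_one, smul_eq_mul]
          exact ENNReal.inv_mul_cancel hcard0 hcardtop
        · left
          have hd : ∀ x ∈ C, Measure.dirac (fun y => pa (y + x)) E = 0 := by
            intro x hx
            rw [Measure.dirac_apply' _ hE]
            have : (fun y => pa (y + x)) ∉ E := fun h => hpE ((hper x pa).1 h)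
            simp [Set.indicator_of_notMem this]
          rw [Finset.sum_congr rfl hd]
          simp
      have hmain := hR μ hprob hinv herg
      -- compute the two integrals
      have hint : ∀ (g : ((Fin D → ℤ) → A) → ℝ), Measurable g → (∀ a, ‖g a‖ ≤ M) →
          ∫ a, g a ∂μ = ((C.card : ℝ))⁻¹ * ∑ x ∈ C, g (fun y => pa (y + x)) := by
        intro g hg hgb
        rw [hμ, integral_smul_measure, integral_finset_sum_measure]
        · congr 1
          · rw [ENNReal.toReal_inv]
            simp
          · apply Finset.sum_congr rfl
            intro x hx
            exact integral_dirac' g _ hg.stronglyMeasurable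
        · intro x hx
          exact ⟨hg.aestronglyMeasurable, HasFiniteIntegral.of_bounded (ae_of_all _ hgb)⟩
      have hg1 := hint (fun a => φ (a 0)) (meas1 0) (fun a => hnorm _)
      have hg2 := hint (fun a => φ (induce B f a 0)) (meas2 0) (fun a => hnorm _)
      rw [hg1, hg2] at hmain
      have hcardR : ((C.card : ℝ)) ≠ 0 := by exact_mod_cast hcards
      have hmain' : ∑ x ∈ C, φ ((fun y => pa (y + x)) 0)
          = ∑ x ∈ C, φ (induce B f (fun y => pa (y + x)) 0) :=
        mul_left_cancel₀ (inv_ne_zero hcardR) hmain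
      calc ∑ x ∈ C, φ (pa x) = ∑ x ∈ C, φ ((fun y => pa (y + x)) 0) := by
            apply Finset.sum_congr rfl
            intro x hx
            simp only [zero_add]
        _ = ∑ x ∈ C, φ (induce B f (fun y => pa (y + x)) 0) := hmain'
        _ = ∑ x ∈ C, φ (induce B f pa x) := by
            apply Finset.sum_congr rfl
            intro x hx
            rw [induce_shift]
    -- vacuum lemma from the core identity
    have hLv : ∀ p : (B → A), (∀ b, φ (p b) = 0) → φ (f p) = 0 := by
      intro p hp
      set c0 : (Fin D → ℤ) → A := fun y => if h : y ∈ B then p ⟨y, h⟩ else v with hc0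
      have hup : ∀ y, φ (c0 y) = 0 := by
        intro y
        by_cases h : y ∈ B <;> simp [hc0, h, hp, hv]
      have hid := hcore c0 s
      have hL : ∑ x ∈ boxZ D s, φ (perc s c0 x) = 0 := by
        apply Finset.sum_eq_zero
        intro x hx
        exact hup _
      rw [hL] at hid
      have hall := (Finset.sum_eq_zero_iff_of_nonneg
        (fun y (_ : y ∈ boxZ D s) => hpos (induce B f (perc s c0) y))).1 hid.symm
      have h0mem : (0 : Fin D → ℤ) ∈ boxZ D s := mem_boxZ.2 fun i => by simp
      have h0 := hall 0 h0mem
      have he : induce B f (perc s c0) 0 = f p := by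
        unfold induce
        congr 1
        funext b
        show perc s c0 ((0 : Fin D → ℤ) + b.1) = p b
        rw [zero_add]
        unfold perc
        have hbmem : b.1 ∈ boxZ D s := mem_boxZ.2 fun i => abs_le.mp (hs b.1 b.2 i)
        rw [redv_self hbmem]
        simp only [hc0]
        rw [dif_pos b.2]
      rwa [he] at h0
    -- assemble `conserved`
    refine ⟨⟨v, hv⟩, ?_, ?_⟩
    · intro a hfin
      set S := hfin.toFinset with hS
      set r := S.sup (fun x => Finset.univ.sup fun i => (x i).natAbs) with hr
      have hsupp : ∀ x, x ∉ boxZ D r → φ (a x) = 0 := by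
        intro x hx
        by_contra hne
        apply hx
        have hxS : x ∈ S := by
          rw [hS, Set.Finite.mem_toFinset]
          exact hne
        rw [mem_boxZ]
        intro i
        have h2 : (Finset.univ.sup fun i => (x i).natAbs) ≤ r :=
          Finset.le_sup (f := fun x : Fin D → ℤ => Finset.univ.sup fun i => (x i).natAbs) hxS
        have h1 : (x i).natAbs ≤ Finset.univ.sup fun i => (x i).natAbs :=
          Finset.le_sup (f := fun i => (x i).natAbs) (Finset.mem_univ i)
        have h3 : |x i| ≤ (r:ℤ) := by
          rw [Int.abs_eq_natAbs]
          exact_mod_cast le_trans h1 h2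
        exact abs_le.mp h3
      exact (backward_main B f φ hs hLv hpos a r hsupp (hcore a (r + 2*s + 1))).1
    · intro a hfin
      set S := hfin.toFinset with hS
      set r := S.sup (fun x => Finset.univ.sup fun i => (x i).natAbs) with hr
      have hsupp : ∀ x, x ∉ boxZ D r → φ (a x) = 0 := by
        intro x hx
        by_contra hne
        apply hx
        have hxS : x ∈ S := by
          rw [hS, Set.Finite.mem_toFinset]
          exact hne
        rw [mem_boxZ]
        intro i
        have h2 : (Finset.univ.sup fun i => (x i).natAbs) ≤ r :=
          Finset.le_sup (f := fun x : Fin D → ℤ => Finset.univ.sup fun i => (x i).natAbs) hxS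
        have h1 : (x i).natAbs ≤ Finset.univ.sup fun i => (x i).natAbs :=
          Finset.le_sup (f := fun i => (x i).natAbs) (Finset.mem_univ i)
        have h3 : |x i| ≤ (r:ℤ) := by
          rw [Int.abs_eq_natAbs]
          exact_mod_cast le_trans h1 h2
        exact abs_le.mp h3
      exact (backward_main B f φ hs hLv hpos a r hsupp (hcore a (r + 2*s + 1))).2
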